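/- Let R₊ be the orthogonal projection of L²(𝕋) onto the closed linear span of {eₙ : n ≥ 0}, where eₙ(e^{iθ}) = e^{inθ}. Let f be a continuous function on 𝕋, let g = conj(f), and define W = M_g∘[M_f, R₊] − M_f∘[M_g, R₊] on L²(𝕋). Then the operator R₊∘W∘R₊ is compact. -/

import Mathlib

open MeasureTheory AddCircle
open scoped Real ENNReal

instance : Fact (0 < 2 * π) := ⟨by positivity⟩

/-- The Hardy subspace `H²` of `L²(𝕋)`: the closed linear span of `{eₙ : n ≥ 0}`. -/
noncomputable def hardySubmodule :
    Submodule ℂ (Lp ℂ 2 (@haarAddCircle (2 * π) _)) :=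
  (Submodule.span ℂ (Set.range fun n : ℕ => fourierLp 2 (n : ℤ))).topologicalClosure

instance : CompleteSpace hardySubmodule :=
  Submodule.topologicalClosure.completeSpace _

/-- The Riesz projection `R₊`: the orthogonal projection of `L²(𝕋)` onto the Hardy space. -/
noncomputable def rieszPlus :
    Lp ℂ 2 (@haarAddCircle (2 * π) _) →L[ℂ] Lp ℂ 2 (@haarAddCircle (2 * π) _) :=
  hardySubmodule.subtypeL ∘L Submodule.orthogonalProjectionOnto hardySubmodule

namespace Stmt16Aux

noncomputable abbrev H := Lp ℂ 2 (@haarAddCircle (2 * π) _)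

lemma memLp_mul (h : C(AddCircle (2 * π), ℂ)) (u : H) :
    MemLp (fun x => h x * u x) 2 (@haarAddCircle (2 * π) _) := by
  refine MemLp.of_le_mul (c := ‖h‖) (Lp.memLp u)
    (h.continuous.aestronglyMeasurable.mul (Lp.aestronglyMeasurable u)) ?_
  filter_upwards with x
  rw [norm_mul]
  exact mul_le_mul_of_nonneg_right (h.norm_coe_le_norm x) (norm_nonneg _)

noncomputable def mulOp (h : C(AddCircle (2 * π), ℂ)) : H →L[ℂ] H :=
  LinearMap.mkContinuous
    { toFun := fun u => (memLp_mul h u).toLp _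
      map_add' := fun u v => by
        refine Lp.ext ?_
        filter_upwards [(memLp_mul h (u + v)).coeFn_toLp, (memLp_mul h u).coeFn_toLp,
          (memLp_mul h v).coeFn_toLp, Lp.coeFn_add u v,
          Lp.coeFn_add ((memLp_mul h u).toLp _) ((memLp_mul h v).toLp _)]
          with x h1 h2 h3 h4 h5
        rw [h1, h5, Pi.add_apply, h2, h3, h4, Pi.add_apply, mul_add]
      map_smul' := fun c u => by
        refine Lp.ext ?_
        filter_upwards [(memLp_mul h (c • u)).coeFn_toLp, (memLp_mul h u).coeFn_toLp,
          Lp.coeFn_smul c u, Lp.coeFn_smul c ((memLp_mul h u).toLp _)]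
          with x h1 h2 h3 h4
        rw [h1, RingHom.id_apply, h4, Pi.smul_apply, h2, h3, Pi.smul_apply, smul_eq_mul,
          smul_eq_mul]
        ring }
    ‖h‖ (fun u => by
      have hb : eLpNorm (fun x => h x * u x) 2 (@haarAddCircle (2 * π) _)
          ≤ ENNReal.ofReal ‖h‖ * eLpNorm u 2 (@haarAddCircle (2 * π) _) := by
        refine eLpNorm_le_mul_eLpNorm_of_ae_le_mul ?_ 2
        filter_upwards with x
        rw [norm_mul]
        exact mul_le_mul_of_nonneg_right (h.norm_coe_le_norm x) (norm_nonneg _)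
      calc ‖(memLp_mul h u).toLp _‖
          = (eLpNorm (fun x => h x * u x) 2 (@haarAddCircle (2 * π) _)).toReal := by
            rw [Lp.norm_toLp]
        _ ≤ (ENNReal.ofReal ‖h‖ * eLpNorm u 2 (@haarAddCircle (2 * π) _)).toReal :=
            ENNReal.toReal_mono (ENNReal.mul_ne_top ENNReal.ofReal_ne_top
              (Lp.eLpNorm_ne_top u)) hb
        _ = ‖h‖ * ‖u‖ := by
            rw [ENNReal.toReal_mul, ENNReal.toReal_ofReal (norm_nonneg _), Lp.norm_def])

lemma coeFn_mulOp (h : C(AddCircle (2 * π), ℂ)) (u : H) :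
    (mulOp h u : AddCircle (2 * π) → ℂ) =ᵐ[@haarAddCircle (2 * π) _] fun x => h x * u x :=
  (memLp_mul h u).coeFn_toLp

lemma norm_mulOp_le (h : C(AddCircle (2 * π), ℂ)) : ‖mulOp h‖ ≤ ‖h‖ :=
  LinearMap.mkContinuous_norm_le _ (norm_nonneg h) _


lemma isCompactOperator_of_mem_fd {E F : Type*} [NormedAddCommGroup E] [NormedSpace ℂ E]
    [NormedAddCommGroup F] [NormedSpace ℂ F] (f : E →L[ℂ] F) (S : Submodule ℂ F)
    [FiniteDimensional ℂ S] (hf : ∀ u, f u ∈ S) : IsCompactOperator ⇑f := by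
  refine ⟨Subtype.val '' Metric.closedBall (0 : S) ‖f‖,
    ((isCompact_closedBall _ _).image continuous_subtype_val), ?_⟩
  refine Filter.mem_of_superset (Metric.closedBall_mem_nhds (0 : E) one_pos) ?_
  intro u hu
  refine ⟨⟨f u, hf u⟩, ?_, rfl⟩
  rw [Metric.mem_closedBall, dist_zero_right]
  have h1 : ‖u‖ ≤ 1 := by simpa [dist_zero_right] using hu
  calc ‖(⟨f u, hf u⟩ : S)‖ = ‖f u‖ := rfl
    _ ≤ ‖f‖ * ‖u‖ := f.le_opNorm u
    _ ≤ ‖f‖ * 1 := mul_le_mul_of_nonneg_left h1 (norm_nonneg f)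
    _ = ‖f‖ := mul_one _


lemma rieszPlus_apply (u : H) :
    rieszPlus u = (Submodule.orthogonalProjectionOnto hardySubmodule u : H) := rfl

lemma fourierLp_mem_hardy {n : ℤ} (hn : 0 ≤ n) : fourierLp 2 n ∈ hardySubmodule := by
  refine Submodule.le_topologicalClosure _ (Submodule.subset_span ?_)
  exact ⟨n.toNat, by simp only [Int.toNat_of_nonneg hn]⟩

lemma rieszPlus_fourierLp_of_nonneg {n : ℤ} (hn : 0 ≤ n) :
    rieszPlus (fourierLp 2 n) = fourierLp 2 n := by
  rw [rieszPlus_apply, ← Submodule.starProjection_apply, Submodule.starProjection_eq_self_iff]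
  exact fourierLp_mem_hardy hn

lemma fourierLp_mem_orthogonal {n : ℤ} (hn : n < 0) :
    fourierLp 2 n ∈ hardySubmoduleᗮ := by
  rw [Submodule.mem_orthogonal]
  set φ : Lp ℂ 2 (@haarAddCircle (2 * π) _) →L[ℂ] ℂ :=
    innerSL ℂ (fourierLp 2 n) with hφ
  have hclosed : IsClosed ((LinearMap.ker (φ : Lp ℂ 2 (@haarAddCircle (2 * π) _) →ₗ[ℂ] ℂ) : Submodule ℂ (Lp ℂ 2 (@haarAddCircle (2 * π) _))) : Set (Lp ℂ 2 (@haarAddCircle (2 * π) _))) :=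
    ContinuousLinearMap.isClosed_ker φ
  have hker : hardySubmodule ≤ LinearMap.ker (φ : Lp ℂ 2 (@haarAddCircle (2 * π) _) →ₗ[ℂ] ℂ) := by
    unfold hardySubmodule
    refine Submodule.topologicalClosure_minimal
      (Submodule.span ℂ (Set.range fun n : ℕ => fourierLp 2 (n : ℤ))) ?_ hclosed
    rw [Submodule.span_le]
    rintro - ⟨k, rfl⟩
    have hne : n ≠ (k : ℤ) := by omega
    simpa [φ, LinearMap.mem_ker] using orthonormal_fourier.2 hne
  intro u hu
  have h0 : φ u = 0 := hker hu
  rw [← inner_conj_symm]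
  simpa [φ] using congrArg (starRingEnd ℂ) h0

lemma rieszPlus_fourierLp_of_neg {n : ℤ} (hn : n < 0) :
    rieszPlus (fourierLp 2 n) = 0 := by
  rw [rieszPlus_apply,
    Submodule.orthogonalProjectionOnto_apply_of_mem_orthogonal
      (fourierLp_mem_orthogonal hn)]
  rfl

lemma rieszPlus_idem (v : H) : rieszPlus (rieszPlus v) = rieszPlus v := by
  rw [rieszPlus_apply (rieszPlus v), rieszPlus_apply v]
  congr 1
  exact Submodule.orthogonalProjectionOnto_mem_subspace_eq_self (Submodule.orthogonalProjectionOnto hardySubmodule v)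


lemma mulOp_fourier_apply (m n : ℤ) :
    mulOp (fourier m) (fourierLp 2 n) = fourierLp 2 (m + n) := by
  refine Lp.ext ?_
  filter_upwards [coeFn_mulOp (fourier m) (fourierLp 2 n), coeFn_fourierLp 2 n,
    coeFn_fourierLp 2 (m + n)] with x h1 h2 h3
  rw [h1, h2, h3, fourier_add]

lemma hankel_fourier_compact (m : ℤ) :
    IsCompactOperator ⇑((1 - rieszPlus) ∘L mulOp (fourier m) ∘L rieszPlus) := by
  set S : Submodule ℂ (Lp ℂ 2 (@haarAddCircle (2 * π) _)) :=
    Submodule.span ℂ (fourierLp 2 '' Set.Ico m 0) with hS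
  haveI : FiniteDimensional ℂ S :=
    FiniteDimensional.span_of_finite ℂ ((Set.finite_Ico m 0).image _)
  set T := (1 - rieszPlus) ∘L mulOp (fourier m) ∘L rieszPlus with hT
  refine isCompactOperator_of_mem_fd T S ?_
  have hclosed : IsClosed (S : Set (Lp ℂ 2 (@haarAddCircle (2 * π) _))) :=
    S.closed_of_finiteDimensional
  have key : ∀ n : ℤ, T (fourierLp 2 n) ∈ S := by
    intro n
    rcases lt_or_ge n 0 with hn | hn
    · have : T (fourierLp 2 n) = 0 := by
        simp [hT, ContinuousLinearMap.comp_apply, rieszPlus_fourierLp_of_neg hn]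
      rw [this]; exact S.zero_mem
    · have h1 : T (fourierLp 2 n) = fourierLp 2 (m + n)
          - rieszPlus (fourierLp 2 (m + n)) := by
        simp [hT, ContinuousLinearMap.comp_apply, rieszPlus_fourierLp_of_nonneg hn,
          mulOp_fourier_apply, ContinuousLinearMap.sub_apply]
      rcases lt_or_ge (m + n) 0 with hmn | hmn
      · rw [h1, rieszPlus_fourierLp_of_neg hmn, sub_zero]
        exact Submodule.subset_span ⟨m + n, ⟨by omega, hmn⟩, rfl⟩
      · rw [h1, rieszPlus_fourierLp_of_nonneg hmn, sub_self]
        exact S.zero_mem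
  intro u
  have hle : (Submodule.span ℂ
        (Set.range (@fourierLp (2 * π) _ 2 _))).topologicalClosure
      ≤ Submodule.comap (T : Lp ℂ 2 (@haarAddCircle (2 * π) _)
          →ₗ[ℂ] Lp ℂ 2 (@haarAddCircle (2 * π) _)) S := by
    refine Submodule.topologicalClosure_minimal _ ?_ (hclosed.preimage T.continuous)
    rw [Submodule.span_le]
    rintro - ⟨n, rfl⟩
    exact key n
  rw [span_fourierLp_closure_eq_top (by norm_num : (2 : ℝ≥0∞) ≠ ∞)] at hle
  exact hle Submodule.mem_top


lemma mulOp_eq_of_ae (k : C(AddCircle (2 * π), ℂ)) (M : Lp ℂ 2 (@haarAddCircle (2 * π) _)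
      →L[ℂ] Lp ℂ 2 (@haarAddCircle (2 * π) _))
    (hM : ∀ u : Lp ℂ 2 (@haarAddCircle (2 * π) _),
      (M u : AddCircle (2 * π) → ℂ) =ᵐ[@haarAddCircle (2 * π) _] fun x => k x * u x) :
    M = mulOp k :=
  ContinuousLinearMap.ext fun u => Lp.ext ((hM u).trans (coeFn_mulOp k u).symm)

lemma mulOp_add (k₁ k₂ : C(AddCircle (2 * π), ℂ)) :
    mulOp (k₁ + k₂) = mulOp k₁ + mulOp k₂ := by
  refine ContinuousLinearMap.ext fun u => Lp.ext ?_
  filter_upwards [coeFn_mulOp (k₁ + k₂) u, coeFn_mulOp k₁ u, coeFn_mulOp k₂ u,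
    Lp.coeFn_add (mulOp k₁ u) (mulOp k₂ u)] with x h1 h2 h3 h4
  rw [h1, ContinuousLinearMap.add_apply (mulOp k₁) (mulOp k₂) u, h4, Pi.add_apply, h2, h3,
    ContinuousMap.add_apply, add_mul]

lemma mulOp_smul (c : ℂ) (k : C(AddCircle (2 * π), ℂ)) :
    mulOp (c • k) = c • mulOp k := by
  refine ContinuousLinearMap.ext fun u => Lp.ext ?_
  filter_upwards [coeFn_mulOp (c • k) u, coeFn_mulOp k u,
    Lp.coeFn_smul c (mulOp k u)] with x h1 h2 h3
  rw [h1, ContinuousLinearMap.smul_apply (mulOp k) c u, h3, Pi.smul_apply, h2,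
    ContinuousMap.smul_apply, smul_eq_mul, smul_eq_mul, mul_assoc]

lemma mulOp_zero : mulOp (0 : C(AddCircle (2 * π), ℂ)) = 0 := by
  refine ContinuousLinearMap.ext fun u => Lp.ext ?_
  filter_upwards [coeFn_mulOp (0 : C(AddCircle (2 * π), ℂ)) u,
    Lp.coeFn_zero ℂ 2 (@haarAddCircle (2 * π) _)] with x h1 h2
  rw [h1, ContinuousLinearMap.zero_apply u, h2]
  simp

lemma mulOp_sub (k₁ k₂ : C(AddCircle (2 * π), ℂ)) :
    mulOp (k₁ - k₂) = mulOp k₁ - mulOp k₂ := by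
  have h := mulOp_add (k₁ - k₂) k₂
  rw [sub_add_cancel] at h
  rw [h]; abel

lemma lipschitz_mulOp : LipschitzWith 1 mulOp := by
  refine LipschitzWith.of_dist_le_mul fun a b => ?_
  rw [dist_eq_norm, dist_eq_norm, NNReal.coe_one, one_mul, ← mulOp_sub]
  exact norm_mulOp_le _

lemma hankel_compact (h : C(AddCircle (2 * π), ℂ)) :
    IsCompactOperator ⇑((1 - rieszPlus) ∘L mulOp h ∘L rieszPlus) := by
  have hcontΦ : Continuous fun k : C(AddCircle (2 * π), ℂ) =>
      (1 - rieszPlus) ∘L mulOp k ∘L rieszPlus :=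
    continuous_const.clm_comp (lipschitz_mulOp.continuous.clm_comp continuous_const)
  have hclosedset : IsClosed {T : Lp ℂ 2 (@haarAddCircle (2 * π) _)
      →L[ℂ] Lp ℂ 2 (@haarAddCircle (2 * π) _) | IsCompactOperator ⇑T} :=
    isClosed_setOf_isCompactOperator
  have hsub : ((Submodule.span ℂ (Set.range (@fourier (2 * π)))) :
        Set C(AddCircle (2 * π), ℂ)) ⊆
      (fun k => (1 - rieszPlus) ∘L mulOp k ∘L rieszPlus) ⁻¹'
        {T | IsCompactOperator ⇑T} := by
    intro k hk
    refine Submodule.span_induction ?_ ?_ ?_ ?_ hk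
    · rintro - ⟨m, rfl⟩
      exact hankel_fourier_compact m
    · show IsCompactOperator ⇑((1 - rieszPlus) ∘L mulOp 0 ∘L rieszPlus)
      rw [mulOp_zero, ContinuousLinearMap.zero_comp, ContinuousLinearMap.comp_zero,
        ContinuousLinearMap.coe_zero']
      exact isCompactOperator_zero
    · intro a b _ _ ha hb
      show IsCompactOperator ⇑((1 - rieszPlus) ∘L mulOp (a + b) ∘L rieszPlus)
      rw [mulOp_add, ContinuousLinearMap.add_comp, ContinuousLinearMap.comp_add,
        ContinuousLinearMap.coe_add']
      exact IsCompactOperator.add ha hb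
    · intro c a _ ha
      show IsCompactOperator ⇑((1 - rieszPlus) ∘L mulOp (c • a) ∘L rieszPlus)
      rw [mulOp_smul, ContinuousLinearMap.smul_comp, ContinuousLinearMap.comp_smul,
        ContinuousLinearMap.coe_smul']
      exact ha.smul c
  have hmem : h ∈ closure ((Submodule.span ℂ (Set.range (@fourier (2 * π)))) :
      Set C(AddCircle (2 * π), ℂ)) := by
    have htop := span_fourier_closure_eq_top (T := 2 * π)
    have : h ∈ (Submodule.span ℂ (Set.range (@fourier (2 * π)))).topologicalClosure := by
      rw [htop]; trivial
    rwa [← Submodule.topologicalClosure_coe]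
  exact closure_minimal hsub (hclosedset.preimage hcontΦ) hmem

end Stmt16Aux

/-- For continuous `f` on `𝕋` and `g = conj f`, the compression `R₊WR₊` of
`W = M_g[M_f,R₊] − M_f[M_g,R₊]` is a compact operator. -/
theorem stmt_16 (f : C(AddCircle (2 * π), ℂ)) (g : AddCircle (2 * π) → ℂ)
    (hfg : g = fun x => starRingEnd ℂ (f x))
    (Mf Mg : Lp ℂ 2 (@haarAddCircle (2 * π) _) →L[ℂ] Lp ℂ 2 (@haarAddCircle (2 * π) _))
    (hMf : ∀ u : Lp ℂ 2 (@haarAddCircle (2 * π) _),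
      (Mf u : AddCircle (2 * π) → ℂ) =ᵐ[@haarAddCircle (2 * π) _] fun x => f x * u x)
    (hMg : ∀ u : Lp ℂ 2 (@haarAddCircle (2 * π) _),
      (Mg u : AddCircle (2 * π) → ℂ) =ᵐ[@haarAddCircle (2 * π) _] fun x => g x * u x)
    (W : Lp ℂ 2 (@haarAddCircle (2 * π) _) →L[ℂ] Lp ℂ 2 (@haarAddCircle (2 * π) _))
    (hW : W = Mg ∘L (Mf ∘L rieszPlus - rieszPlus ∘L Mf)
            - Mf ∘L (Mg ∘L rieszPlus - rieszPlus ∘L Mg)) :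
    IsCompactOperator ⇑(rieszPlus ∘L W ∘L rieszPlus) := by
  subst hfg
  have hMf' : Mf = Stmt16Aux.mulOp f := Stmt16Aux.mulOp_eq_of_ae f Mf hMf
  have hMg' : Mg = Stmt16Aux.mulOp (star f) := by
    refine Stmt16Aux.mulOp_eq_of_ae (star f) Mg ?_
    intro u
    refine (hMg u).trans ?_
    filter_upwards with x
    rw [ContinuousMap.star_apply, RCLike.star_def]
  have hPP : ∀ v, rieszPlus (rieszPlus v) = rieszPlus v := Stmt16Aux.rieszPlus_idem
  have key : rieszPlus ∘L W ∘L rieszPlus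
      = (rieszPlus ∘L Mg) ∘L ((1 - rieszPlus) ∘L Mf ∘L rieszPlus)
        - (rieszPlus ∘L Mf) ∘L ((1 - rieszPlus) ∘L Mg ∘L rieszPlus) := by
    subst hW
    refine ContinuousLinearMap.ext fun u => ?_
    simp only [ContinuousLinearMap.comp_apply, ContinuousLinearMap.sub_apply,
      ContinuousLinearMap.one_apply, map_sub, hPP]
  rw [key, hMf', hMg', ContinuousLinearMap.coe_sub', ContinuousLinearMap.coe_comp',
    ContinuousLinearMap.coe_comp']
  exact ((Stmt16Aux.hankel_compact f).clm_comp
      (rieszPlus ∘L Stmt16Aux.mulOp (star f))).sub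
    ((Stmt16Aux.hankel_compact (star f)).clm_comp (rieszPlus ∘L Stmt16Aux.mulOp f))
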